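/- For each integer d ≥ 3, the quadratic forms Γ_{a,b} := Δ_{a+2,b} - 2Δ_{a+1,b+1} + Δ_{a,b+2} for 0 ≤ a < b ≤ d-3 (with the convention Δ_{a,b} = -Δ_{b,a}) are C(d-2,2) linearly independent quadratic forms in x_0,...,x_d, where Δ_{a,b} = x_a x_{b+1} - x_{a+1} x_b. -/

import Mathlib

open MvPolynomial

/-- `Δ_{a,b} = x_a x_{b+1} - x_{a+1} x_b`; note this formula automatically
satisfies the antisymmetry convention `Δ_{a,b} = -Δ_{b,a}`. -/
noncomputable def Delta (K : Type*) [CommRing K] (a b : ℕ) : MvPolynomial ℕ K :=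
  X a * X (b + 1) - X (a + 1) * X b

/-- `Γ_{a,b} = Δ_{a+2,b} - 2Δ_{a+1,b+1} + Δ_{a,b+2}`. -/
noncomputable def Gamma (K : Type*) [CommRing K] (a b : ℕ) : MvPolynomial ℕ K :=
  Delta K (a + 2) b - 2 • Delta K (a + 1) (b + 1) + Delta K a (b + 2)

lemma pair_eq (a b c e : ℕ) :
    (Finsupp.single (0 : Fin 2) a + Finsupp.single 1 b
      = Finsupp.single (0 : Fin 2) c + Finsupp.single 1 e) ↔ a = c ∧ b = e := by
  constructor
  · intro h
    constructor
    · have := DFunLike.congr_fun h 0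
      simpa [Finsupp.single_apply] using this
    · have := DFunLike.congr_fun h 1
      simpa [Finsupp.single_apply] using this
  · rintro ⟨rfl, rfl⟩; rfl

lemma coeff_pow_mul_pow (K : Type*) [CommRing K] (a b c e : ℕ) :
    coeff (Finsupp.single (0 : Fin 2) c + Finsupp.single 1 e)
      ((X 0 : MvPolynomial (Fin 2) K) ^ a * X 1 ^ b)
      = if a = c ∧ b = e then 1 else 0 := by
  rw [X_pow_eq_monomial, X_pow_eq_monomial, monomial_mul, coeff_monomial, one_mul]
  simp [pair_eq]

lemma g_indep (K : Type*) [Field K] (d : ℕ) :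
    LinearIndependent K
      (fun q : {ab : ℕ × ℕ // ab.1 < ab.2 ∧ ab.2 ≤ d - 3} =>
        ((X 0 : MvPolynomial (Fin 2) K) ^ q.1.1 * X 1 ^ q.1.2
          - X 0 ^ q.1.2 * X 1 ^ q.1.1)) := by
  rw [linearIndependent_iff']
  intro s c hsum q hq
  have h := congrArg (coeff (Finsupp.single (0 : Fin 2) q.1.1 + Finsupp.single 1 q.1.2)) hsum
  rw [coeff_sum, coeff_zero] at h
  rw [Finset.sum_eq_single q] at h
  · rw [coeff_smul, coeff_sub, coeff_pow_mul_pow, coeff_pow_mul_pow] at h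
    have h1 : q.1.1 = q.1.1 ∧ q.1.2 = q.1.2 := ⟨rfl, rfl⟩
    have h2 : ¬(q.1.2 = q.1.1 ∧ q.1.1 = q.1.2) := by
      rintro ⟨h2, -⟩; exact absurd h2 (Nat.ne_of_gt q.2.1)
    rw [if_pos h1, if_neg h2] at h
    simpa using h
  · intro j hj hne
    rw [coeff_smul, coeff_sub, coeff_pow_mul_pow, coeff_pow_mul_pow]
    have h1 : ¬(j.1.1 = q.1.1 ∧ j.1.2 = q.1.2) := by
      rintro ⟨h1, h2⟩
      exact hne (Subtype.ext (Prod.ext h1 h2))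
    have h2 : ¬(j.1.2 = q.1.1 ∧ j.1.1 = q.1.2) := by
      rintro ⟨h2, h3⟩
      have := j.2.1; have := q.2.1; omega
    rw [if_neg h1, if_neg h2]
    simp
  · intro h; exact absurd hq h

/-- For `d ≥ 3` and a field of characteristic zero, the quadratic forms
`Γ_{a,b}` for `0 ≤ a < b ≤ d-3` are `C(d-2,2)` linearly independent quadratic
forms in `x_0,...,x_d`. -/
theorem gamma_linearIndependent (K : Type*) [Field K] [CharZero K] (d : ℕ) (hd : 3 ≤ d) :
    LinearIndependent K
      (fun q : {ab : ℕ × ℕ // ab.1 < ab.2 ∧ ab.2 ≤ d - 3} => Gamma K q.1.1 q.1.2) ∧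
    Nat.card {ab : ℕ × ℕ // ab.1 < ab.2 ∧ ab.2 ≤ d - 3} = Nat.choose (d - 2) 2 := by
  constructor
  · set ψ : MvPolynomial ℕ K →ₐ[K] MvPolynomial (Fin 2) K :=
      aeval (fun i : ℕ => (X 0 : MvPolynomial (Fin 2) K) ^ i + X 1 ^ i) with hψ
    have key : ∀ a b : ℕ, ψ (Gamma K a b)
        = (X 1 - X 0 : MvPolynomial (Fin 2) K) ^ 3
            * (X 0 ^ a * X 1 ^ b - X 0 ^ b * X 1 ^ a) := by
      intro a b
      simp only [hψ, Gamma, Delta, two_smul, map_add, map_sub, map_mul, aeval_X]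
      ring
    apply LinearIndependent.of_comp ψ.toLinearMap
    have hX : (X 1 - X 0 : MvPolynomial (Fin 2) K) ≠ 0 := by
      intro h
      have := congrArg (coeff (Finsupp.single (1 : Fin 2) 1)) h
      simp [coeff_X, coeff_zero, Finsupp.single_eq_single_iff] at this
    have hne : ((X 1 - X 0 : MvPolynomial (Fin 2) K) ^ 3) ≠ 0 := pow_ne_zero _ hX
    have heq : (⇑ψ.toLinearMap ∘ fun q : {ab : ℕ × ℕ // ab.1 < ab.2 ∧ ab.2 ≤ d - 3} =>
        Gamma K q.1.1 q.1.2)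
        = ⇑(LinearMap.mulLeft K ((X 1 - X 0 : MvPolynomial (Fin 2) K) ^ 3)) ∘
          (fun q : {ab : ℕ × ℕ // ab.1 < ab.2 ∧ ab.2 ≤ d - 3} =>
            ((X 0 : MvPolynomial (Fin 2) K) ^ q.1.1 * X 1 ^ q.1.2
              - X 0 ^ q.1.2 * X 1 ^ q.1.1)) := by
      funext q
      simpa using key q.1.1 q.1.2
    rw [heq]
    exact (g_indep K d).map' _ (LinearMap.ker_eq_bot.mpr (mul_right_injective₀ hne))
  · have e1 : {ab : ℕ × ℕ // ab.1 < ab.2 ∧ ab.2 ≤ d - 3} ≃ (Σ b : Fin (d - 2), Fin b.1) :=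
      { toFun := fun q => ⟨⟨q.1.2, by have := q.2.2; omega⟩, ⟨q.1.1, q.2.1⟩⟩
        invFun := fun p => ⟨(p.2.1, p.1.1), p.2.2, by have := p.1.2; omega⟩
        left_inv := fun q => rfl
        right_inv := fun p => rfl }
    rw [Nat.card_congr e1, Nat.card_eq_fintype_card, Fintype.card_sigma]
    simp only [Fintype.card_fin]
    rw [Fin.sum_univ_eq_sum_range (fun i => i) (d - 2), Finset.sum_range_id, Nat.choose_two_right]
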